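/- Assume n_i ≥ 1. For x ∈ ℝ^d and each i ∈ I_≤, set x_i = x − max(⟨a_i, x⟩ − b_i, 0)·a_i. Then the average over the inequality rows satisfies (1/n_i)·Σ_{i∈I_≤} d(x_i, S)² ≤ d(x, S)² − (1/n_i)·Σ_{i∈I_≤} (max(⟨a_i, x⟩ − b_i, 0))². -/

import Mathlib

open scoped RealInnerProductSpace BigOperators

noncomputable section

lemma kacz_step_key {E : Type*} [NormedAddCommGroup E] [InnerProductSpace ℝ E]
    (a x z : E) (b : ℝ) (ha : ‖a‖ = 1) (hz : ⟪a, z⟫ ≤ b) :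
    dist (x - max (⟪a, x⟫ - b) 0 • a) z ^ 2 ≤ dist x z ^ 2 - (max (⟪a, x⟫ - b) 0) ^ 2 := by
  set l : ℝ := max (⟪a, x⟫ - b) 0 with hl
  have hnorm : dist (x - l • a) z ^ 2 =
      dist x z ^ 2 - 2 * l * ⟪a, x - z⟫ + l ^ 2 := by
    rw [dist_eq_norm, dist_eq_norm]
    have : x - l • a - z = (x - z) - l • a := by abel
    rw [this, norm_sub_sq_real, real_inner_smul_right, norm_smul, real_inner_comm]
    simp [ha, abs_of_nonneg (le_max_right _ 0 : (0:ℝ) ≤ l)]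
    ring
  rw [hnorm]
  rcases le_or_gt l 0 with h0 | h0
  · have : l = 0 := le_antisymm h0 (le_max_right _ 0)
    simp [this]
  · have hle : l ≤ ⟪a, x - z⟫ := by
      have : l = ⟪a, x⟫ - b := by
        rcases max_cases (⟪a, x⟫ - b) 0 with ⟨h1, _⟩ | ⟨h1, _⟩
        · exact h1
        · exfalso; rw [hl, h1] at h0; exact lt_irrefl _ h0
      rw [this, inner_sub_right]
      linarith
    nlinarith [sq_nonneg l]

lemma kacz_infDist_key {E : Type*} [NormedAddCommGroup E] [InnerProductSpace ℝ E]
    (a x : E) (b : ℝ) (ha : ‖a‖ = 1) (S : Set E) (hSne : S.Nonempty)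
    (hz : ∀ z ∈ S, ⟪a, z⟫ ≤ b) :
    Metric.infDist (x - max (⟪a, x⟫ - b) 0 • a) S ^ 2 + (max (⟪a, x⟫ - b) 0) ^ 2 ≤
      Metric.infDist x S ^ 2 := by
  set l : ℝ := max (⟪a, x⟫ - b) 0 with hl
  set y := x - l • a with hy
  have hA : 0 ≤ Metric.infDist y S ^ 2 + l ^ 2 := by positivity
  have key : ∀ z ∈ S, Metric.infDist y S ^ 2 + l ^ 2 ≤ dist x z ^ 2 := by
    intro z hzS
    have h1 : Metric.infDist y S ≤ dist y z := Metric.infDist_le_dist_of_mem hzS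
    have h2 : Metric.infDist y S ^ 2 ≤ dist y z ^ 2 := by
      have := Metric.infDist_nonneg (x := y) (s := S)
      nlinarith
    have h3 := kacz_step_key a x z b ha (hz z hzS)
    rw [← hl, ← hy] at h3
    linarith
  have hsqrt : Real.sqrt (Metric.infDist y S ^ 2 + l ^ 2) ≤ Metric.infDist x S := by
    by_contra h
    push_neg at h
    obtain ⟨z, hzS, hlt⟩ := (Metric.infDist_lt_iff hSne).1 h
    have hk := key z hzS
    nlinarith [Real.sq_sqrt hA, dist_nonneg (x := x) (y := z),
      Real.sqrt_nonneg (Metric.infDist y S ^ 2 + l ^ 2)]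
  have := Real.sq_sqrt hA
  nlinarith [Real.sqrt_nonneg (Metric.infDist y S ^ 2 + l ^ 2),
    Metric.infDist_nonneg (x := x) (s := S)]

theorem kaczmarz_inequality_rows_average_progress
    {ne ni d : ℕ} (hni : 0 < ni)
    (a : Fin (ne + ni) → EuclideanSpace ℝ (Fin d)) (b : Fin (ne + ni) → ℝ)
    (ha : ∀ i, ‖a i‖ = 1)
    (S : Set (EuclideanSpace ℝ (Fin d)))
    (hSdef : S = {x | (∀ i : Fin (ne + ni), (i : ℕ) < ne → ⟪a i, x⟫ = b i) ∧
                      (∀ i : Fin (ne + ni), ne ≤ (i : ℕ) → ⟪a i, x⟫ ≤ b i)})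
    (hSne : S.Nonempty)
    (x : EuclideanSpace ℝ (Fin d)) :
    (1 / ni) * ∑ i ∈ (Finset.univ.filter fun i : Fin (ne + ni) => ne ≤ (i : ℕ)),
        Metric.infDist (x - max (⟪a i, x⟫ - b i) 0 • a i) S ^ 2 ≤
      Metric.infDist x S ^ 2 -
        (1 / ni) * ∑ i ∈ (Finset.univ.filter fun i : Fin (ne + ni) => ne ≤ (i : ℕ)),
          (max (⟪a i, x⟫ - b i) 0) ^ 2 := by
  set F := (Finset.univ.filter fun i : Fin (ne + ni) => ne ≤ (i : ℕ)) with hF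
  have hcard : F.card = ni := by
    have : F = Finset.univ.image (Fin.natAdd ne : Fin ni → Fin (ne + ni)) := by
      ext i
      simp only [hF, Finset.mem_filter, Finset.mem_univ, true_and, Finset.mem_image]
      constructor
      · intro h
        refine ⟨⟨(i : ℕ) - ne, ?_⟩, ?_⟩
        · omega
        · ext; simp [Fin.natAdd]; omega
      · rintro ⟨j, rfl⟩; simp [Fin.natAdd]
    rw [this, Finset.card_image_of_injective _ (Fin.strictMono_natAdd ne).injective]
    simp
  have hper : ∀ i ∈ F, Metric.infDist (x - max (⟪a i, x⟫ - b i) 0 • a i) S ^ 2 ≤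
      Metric.infDist x S ^ 2 - (max (⟪a i, x⟫ - b i) 0) ^ 2 := by
    intro i hi
    have hiF : ne ≤ (i : ℕ) := by
      simpa [hF, Finset.mem_filter] using hi
    have := kacz_infDist_key (a i) x (b i) (ha i) S hSne (fun z hz => by
      rw [hSdef] at hz; exact hz.2 i hiF)
    linarith
  have hsum : ∑ i ∈ F, Metric.infDist (x - max (⟪a i, x⟫ - b i) 0 • a i) S ^ 2 ≤
      ∑ i ∈ F, (Metric.infDist x S ^ 2 - (max (⟪a i, x⟫ - b i) 0) ^ 2) :=
    Finset.sum_le_sum hper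
  rw [Finset.sum_sub_distrib, Finset.sum_const, hcard, nsmul_eq_mul] at hsum
  have hni' : (0:ℝ) < ni := by exact_mod_cast hni
  calc (1 / (ni:ℝ)) * ∑ i ∈ F, Metric.infDist (x - max (⟪a i, x⟫ - b i) 0 • a i) S ^ 2
      ≤ (1 / (ni:ℝ)) * ((ni:ℝ) * Metric.infDist x S ^ 2 - ∑ i ∈ F, (max (⟪a i, x⟫ - b i) 0) ^ 2) := by
        apply mul_le_mul_of_nonneg_left hsum (by positivity)
    _ = Metric.infDist x S ^ 2 - (1 / (ni:ℝ)) * ∑ i ∈ F, (max (⟪a i, x⟫ - b i) 0) ^ 2 := by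
        field_simp
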